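/- Let ζ, B, R : ℝ → ℝ be four times continuously differentiable on a neighborhood of 0, with R(0) = 0, R'(0) ≠ 0, ζ(0) > 0, ζ'(0) = 0, B(0) = 1/R'(0)², B'(0) = −2R''(0)/R'(0)³, and R(r) ≠ 0, ζ(r) ≠ 0 for all sufficiently small r > 0. Then lim_{r→0⁺} [ −(1 − B(r)R'(r)²)/R(r)² + 2B(r)ζ'(r)R'(r)/(R(r)ζ(r)) ] = B''(0)/2 + 2ζ''(0)/(ζ(0)R'(0)²) + R'''(0)/R'(0)³ − 3R''(0)²/R'(0)⁴. -/

import Mathlib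

open Filter Topology

/-- Central value of `G_{r̂r̂}` in general diagonal coordinates: under the regularity
conditions at the centre,
`G_{r̂r̂} → B''(0)/2 + 2ζ''(0)/(ζ(0)R'(0)²) + R'''(0)/R'(0)³ − 3R''(0)²/R'(0)⁴`. -/
theorem centre_Grr_general_diagonal
    (ζ B R : ℝ → ℝ) (δ : ℝ) (hδ : 0 < δ)
    (hζ : ContDiffOn ℝ 4 ζ (Set.Ioo (-δ) δ))
    (hB : ContDiffOn ℝ 4 B (Set.Ioo (-δ) δ))
    (hR : ContDiffOn ℝ 4 R (Set.Ioo (-δ) δ))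
    (hR0 : R 0 = 0)
    (hR1 : deriv R 0 ≠ 0)
    (hζ0 : 0 < ζ 0)
    (hζ1 : deriv ζ 0 = 0)
    (hB0 : B 0 = 1 / (deriv R 0) ^ 2)
    (hB1 : deriv B 0 = -2 * deriv (deriv R) 0 / (deriv R 0) ^ 3)
    (hRne : ∀ᶠ r in 𝓝[>] (0 : ℝ), R r ≠ 0)
    (hζne : ∀ᶠ r in 𝓝[>] (0 : ℝ), ζ r ≠ 0) :
    Tendsto
      (fun r => -((1 - B r * (deriv R r) ^ 2) / (R r) ^ 2)
        + 2 * B r * deriv ζ r * deriv R r / (R r * ζ r))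
      (𝓝[>] (0 : ℝ))
      (𝓝 (deriv (deriv B) 0 / 2
        + 2 * deriv (deriv ζ) 0 / (ζ 0 * (deriv R 0) ^ 2)
        + deriv (deriv (deriv R)) 0 / (deriv R 0) ^ 3
        - 3 * (deriv (deriv R) 0) ^ 2 / (deriv R 0) ^ 4)) := by
  have hso : IsOpen (Set.Ioo (-δ) δ) := isOpen_Ioo
  have h0s : (0:ℝ) ∈ Set.Ioo (-δ) δ := ⟨by linarith, hδ⟩
  have hsn : Set.Ioo (-δ) δ ∈ 𝓝 (0:ℝ) := hso.mem_nhds h0s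
  -- smoothness of derivatives
  have hR' : ContDiffOn ℝ 3 (deriv R) (Set.Ioo (-δ) δ) := hR.deriv_of_isOpen hso (by norm_num)
  have hR'' : ContDiffOn ℝ 2 (deriv (deriv R)) (Set.Ioo (-δ) δ) :=
    hR'.deriv_of_isOpen hso (by norm_num)
  have hζ' : ContDiffOn ℝ 3 (deriv ζ) (Set.Ioo (-δ) δ) := hζ.deriv_of_isOpen hso (by norm_num)
  have hB' : ContDiffOn ℝ 3 (deriv B) (Set.Ioo (-δ) δ) := hB.deriv_of_isOpen hso (by norm_num)
  -- differentiability at points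
  have dAt : ∀ {g : ℝ → ℝ}, ContDiffOn ℝ 2 g (Set.Ioo (-δ) δ) →
      ∀ {x : ℝ}, x ∈ Set.Ioo (-δ) δ → DifferentiableAt ℝ g x := by
    intro g hg x hx
    exact (hg.contDiffAt (hso.mem_nhds hx)).differentiableAt (by norm_num)
  have hRd : ∀ {x : ℝ}, x ∈ Set.Ioo (-δ) δ → DifferentiableAt ℝ R x :=
    fun hx => dAt (hR.of_le (by norm_num)) hx
  have hR'd : ∀ {x : ℝ}, x ∈ Set.Ioo (-δ) δ → DifferentiableAt ℝ (deriv R) x :=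
    fun hx => dAt (hR'.of_le (by norm_num)) hx
  have hR''d : ∀ {x : ℝ}, x ∈ Set.Ioo (-δ) δ → DifferentiableAt ℝ (deriv (deriv R)) x :=
    fun hx => dAt hR'' hx
  have hBd : ∀ {x : ℝ}, x ∈ Set.Ioo (-δ) δ → DifferentiableAt ℝ B x :=
    fun hx => dAt (hB.of_le (by norm_num)) hx
  have hB'd : ∀ {x : ℝ}, x ∈ Set.Ioo (-δ) δ → DifferentiableAt ℝ (deriv B) x :=
    fun hx => dAt (hB'.of_le (by norm_num)) hx
  have hζd : ∀ {x : ℝ}, x ∈ Set.Ioo (-δ) δ → DifferentiableAt ℝ ζ x :=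
    fun hx => dAt (hζ.of_le (by norm_num)) hx
  have hζ'd : ∀ {x : ℝ}, x ∈ Set.Ioo (-δ) δ → DifferentiableAt ℝ (deriv ζ) x :=
    fun hx => dAt (hζ'.of_le (by norm_num)) hx
  have hmono : 𝓝[>] (0:ℝ) ≤ 𝓝[≠] (0:ℝ) :=
    nhdsWithin_mono _ (fun x hx => ne_of_gt hx)
  have hmem : ∀ᶠ x in 𝓝[>] (0:ℝ), x ∈ Set.Ioo (-δ) δ :=
    mem_nhdsWithin_of_mem_nhds hsn
  have hpos : ∀ᶠ x in 𝓝[>] (0:ℝ), (0:ℝ) < x := self_mem_nhdsWithin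
  -- basic limits
  have tB : Tendsto B (𝓝[>] (0:ℝ)) (𝓝 (B 0)) :=
    ((hBd h0s).continuousAt.tendsto).mono_left nhdsWithin_le_nhds
  have tR' : Tendsto (deriv R) (𝓝[>] (0:ℝ)) (𝓝 (deriv R 0)) :=
    ((hR'd h0s).continuousAt.tendsto).mono_left nhdsWithin_le_nhds
  have tζ : Tendsto ζ (𝓝[>] (0:ℝ)) (𝓝 (ζ 0)) :=
    ((hζd h0s).continuousAt.tendsto).mono_left nhdsWithin_le_nhds
  -- r / R r → (deriv R 0)⁻¹
  have tRslope : Tendsto (fun r => R r / r) (𝓝[>] (0:ℝ)) (𝓝 (deriv R 0)) := by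
    have h := hasDerivAt_iff_tendsto_slope.1 (hRd h0s).hasDerivAt
    have h2 : Tendsto (fun r => R r / r) (𝓝[≠] (0:ℝ)) (𝓝 (deriv R 0)) := by
      refine h.congr (fun r => ?_)
      simp [slope_def_field, hR0]
    exact h2.mono_left hmono
  have tro : Tendsto (fun r => r / R r) (𝓝[>] (0:ℝ)) (𝓝 (deriv R 0)⁻¹) := by
    have := tRslope.inv₀ hR1
    refine this.congr (fun r => ?_)
    rw [inv_div]
  -- deriv ζ r / r → ζ''(0)
  have tζslope : Tendsto (fun r => deriv ζ r / r) (𝓝[>] (0:ℝ))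
      (𝓝 (deriv (deriv ζ) 0)) := by
    have h := hasDerivAt_iff_tendsto_slope.1 (hζ'd h0s).hasDerivAt
    have h2 : Tendsto (fun r => deriv ζ r / r) (𝓝[≠] (0:ℝ)) (𝓝 (deriv (deriv ζ) 0)) := by
      refine h.congr (fun r => ?_)
      simp [slope_def_field, hζ1]
    exact h2.mono_left hmono
  -- the auxiliary function f and its derivative
  set f : ℝ → ℝ := fun r => B r * (deriv R r) ^ 2 - 1 with hfdef
  set D : ℝ → ℝ := fun x => deriv B x * (deriv R x) ^ 2
      + B x * (2 * deriv R x * deriv (deriv R) x) with hDdef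
  have hfD : ∀ x ∈ Set.Ioo (-δ) δ, HasDerivAt f (D x) x := by
    intro x hx
    have h1 : HasDerivAt (fun r => (deriv R r) ^ 2)
        ((2:ℕ) * (deriv R x) ^ 1 * deriv (deriv R) x) x :=
      (hR'd hx).hasDerivAt.pow 2
    have h2 := ((hBd hx).hasDerivAt.mul h1).sub_const 1
    refine h2.congr_deriv ?_
    simp only [hDdef]
    push_cast
    ring
  have hfderiv_eq : ∀ x ∈ Set.Ioo (-δ) δ, deriv f x = D x :=
    fun x hx => (hfD x hx).deriv
  -- second derivative of f at 0
  set dd : ℝ := deriv (deriv B) 0 * (deriv R 0) ^ 2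
      + 4 * deriv B 0 * deriv R 0 * deriv (deriv R) 0
      + 2 * B 0 * ((deriv (deriv R) 0) ^ 2 + deriv R 0 * deriv (deriv (deriv R)) 0) with hdddef
  have hD0 : HasDerivAt D dd 0 := by
    have hB'0 : HasDerivAt (deriv B) (deriv (deriv B) 0) 0 := (hB'd h0s).hasDerivAt
    have hR'0 : HasDerivAt (deriv R) (deriv (deriv R) 0) 0 := (hR'd h0s).hasDerivAt
    have hR''0 : HasDerivAt (deriv (deriv R)) (deriv (deriv (deriv R)) 0) 0 :=
      (hR''d h0s).hasDerivAt
    have hB0' : HasDerivAt B (deriv B 0) 0 := (hBd h0s).hasDerivAt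
    have h1 : HasDerivAt (fun r => (deriv R r) ^ 2)
        ((2:ℕ) * (deriv R 0) ^ 1 * deriv (deriv R) 0) 0 := hR'0.pow 2
    have h2 := hB'0.mul h1
    have h3 := hB0'.mul ((hR'0.const_mul (2:ℝ)).mul hR''0)
    have h4 := h2.add h3
    refine h4.congr_deriv ?_
    rw [hdddef]
    simp only [Pi.mul_apply]
    push_cast
    ring
  have hfd' : deriv f =ᶠ[𝓝 (0:ℝ)] D :=
    Filter.eventuallyEq_of_mem hsn hfderiv_eq
  have hf'0 : HasDerivAt (deriv f) dd 0 := hD0.congr_of_eventuallyEq hfd'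
  have hderivf0 : deriv f 0 = 0 := by
    rw [hfderiv_eq 0 h0s, hDdef]
    simp only
    rw [hB1, hB0]
    field_simp
    ring
  -- deriv f r / r → dd
  have tdf : Tendsto (fun r => deriv f r / r) (𝓝[>] (0:ℝ)) (𝓝 dd) := by
    have h := hasDerivAt_iff_tendsto_slope.1 hf'0
    have h2 : Tendsto (fun r => deriv f r / r) (𝓝[≠] (0:ℝ)) (𝓝 dd) := by
      refine h.congr (fun r => ?_)
      simp [slope_def_field, hderivf0]
    exact h2.mono_left hmono
  -- L'Hôpital : f r / r² → dd / 2
  have tf2 : Tendsto (fun r => f r / r ^ 2) (𝓝[>] (0:ℝ)) (𝓝 (dd / 2)) := by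
    apply deriv.lhopital_zero_nhdsGT (g := fun r : ℝ => r ^ 2)
    · exact hmem.mono (fun x hx => (hfD x hx).differentiableAt)
    · refine hpos.mono (fun x hx => ?_)
      rw [deriv_pow_field]
      positivity
    · have hf0 : f 0 = 0 := by
        simp only [hfdef]
        rw [hB0]
        field_simp
        norm_num
      have := ((hfD 0 h0s).differentiableAt.continuousAt.tendsto).mono_left
        (nhdsWithin_le_nhds : 𝓝[>] (0:ℝ) ≤ 𝓝 0)
      rwa [hf0] at this
    · have : Tendsto (fun r : ℝ => r ^ 2) (𝓝 (0:ℝ)) (𝓝 ((0:ℝ) ^ 2)) :=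
        (continuous_pow 2).tendsto 0
      simpa using this.mono_left nhdsWithin_le_nhds
    · have h2 : Tendsto (fun r => deriv f r / r / 2) (𝓝[>] (0:ℝ)) (𝓝 (dd / 2)) :=
        tdf.div_const 2
      refine h2.congr' ?_
      refine hpos.mono (fun x hx => ?_)
      have hx' : x ≠ 0 := ne_of_gt hx
      simp only [deriv_pow_field]
      norm_num
      rw [div_div, mul_comm x 2]
  -- assemble the limit of the rewritten expression
  have hζ0ne : ζ 0 ≠ 0 := ne_of_gt hζ0
  have tmain : Tendsto
      (fun r => (f r / r ^ 2) * (r / R r) ^ 2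
        + 2 * B r * ((deriv ζ r / r) * (r / R r)) * deriv R r * (ζ r)⁻¹)
      (𝓝[>] (0:ℝ))
      (𝓝 ((dd / 2) * ((deriv R 0)⁻¹) ^ 2
        + 2 * B 0 * (deriv (deriv ζ) 0 * (deriv R 0)⁻¹) * deriv R 0 * (ζ 0)⁻¹)) := by
    exact (tf2.mul (tro.pow 2)).add
      ((((((tB.const_mul 2)).mul (tζslope.mul tro)).mul tR').mul (tζ.inv₀ hζ0ne)))
  -- the original function eventually equals the rewritten one
  have hev : (fun r => -((1 - B r * (deriv R r) ^ 2) / (R r) ^ 2)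
        + 2 * B r * deriv ζ r * deriv R r / (R r * ζ r))
      =ᶠ[𝓝[>] (0:ℝ)]
      (fun r => (f r / r ^ 2) * (r / R r) ^ 2
        + 2 * B r * ((deriv ζ r / r) * (r / R r)) * deriv R r * (ζ r)⁻¹) := by
    filter_upwards [hpos, hRne, hζne] with r hr hRr hζr
    have hrne : r ≠ 0 := ne_of_gt hr
    simp only [hfdef]
    field_simp
    ring
  have hval : deriv (deriv B) 0 / 2
        + 2 * deriv (deriv ζ) 0 / (ζ 0 * (deriv R 0) ^ 2)
        + deriv (deriv (deriv R)) 0 / (deriv R 0) ^ 3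
        - 3 * (deriv (deriv R) 0) ^ 2 / (deriv R 0) ^ 4
      = (dd / 2) * ((deriv R 0)⁻¹) ^ 2
        + 2 * B 0 * (deriv (deriv ζ) 0 * (deriv R 0)⁻¹) * deriv R 0 * (ζ 0)⁻¹ := by
    rw [hdddef, hB1, hB0]
    field_simp
    ring
  rw [hval]
  exact tmain.congr' hev.symm
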